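/- Let λ > 0, let a, b ∈ ℝ, and let ε₁, ε₂ be independent real random variables each with the Gumbel(0, λ) distribution. Then P(a + ε₁ > b + ε₂) = exp(a/λ) / (exp(a/λ) + exp(b/λ)) = 1 / (1 + exp((b − a)/λ)); i.e., pairwise comparisons of Gumbel-perturbed utilities follow the Logistic (Bradley–Terry) model. -/

import Mathlib

open MeasureTheory ProbabilityTheory Real Filter Set Topology

/-- The Gumbel(0, λ) distribution on ℝ, given by its density with respect to Lebesgue measure. -/
noncomputable def gumbel (l : ℝ) : Measure ℝ :=
  volume.withDensity fun x => ENNReal.ofReal ((1 / l) * Real.exp (-x / l - Real.exp (-x / l)))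

/-- Auxiliary density: `(1/l) e^{-x/l} e^{-k e^{-x/l}}`. -/
noncomputable def gumbelAuxPdf (l k x : ℝ) : ℝ :=
  (1 / l) * Real.exp (-x / l) * Real.exp (-(k * Real.exp (-x / l)))

/-- Auxiliary antiderivative: `(1/k) e^{-k e^{-x/l}}`. -/
noncomputable def gumbelAuxCdf (l k x : ℝ) : ℝ :=
  (1 / k) * Real.exp (-(k * Real.exp (-x / l)))

lemma gumbelAuxPdf_nonneg (l k x : ℝ) (hl : 0 < l) : 0 ≤ gumbelAuxPdf l k x := by
  unfold gumbelAuxPdf; positivity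

lemma hasDerivAt_gumbelAuxCdf (l k : ℝ) (hl : 0 < l) (hk : 0 < k) (x : ℝ) :
    HasDerivAt (gumbelAuxCdf l k) (gumbelAuxPdf l k x) x := by
  have h1 : HasDerivAt (fun x : ℝ => -x / l) (-1 / l) x := by
    simpa using ((hasDerivAt_id x).neg.div_const l)
  have h2 := (((h1.exp.const_mul k).neg.exp).const_mul (1 / k))
  refine h2.congr_deriv ?_
  unfold gumbelAuxPdf
  simp only [Pi.neg_apply]
  field_simp

lemma tendsto_gumbelAuxCdf_atTop (l k : ℝ) (hl : 0 < l) (hk : 0 < k) :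
    Tendsto (gumbelAuxCdf l k) atTop (𝓝 (1 / k)) := by
  have h0 : Tendsto (fun x : ℝ => -x / l) atTop atBot := by
    apply Tendsto.atBot_div_const hl
    exact tendsto_neg_atBot_iff.mpr tendsto_id
  have h1 : Tendsto (fun x : ℝ => Real.exp (-x / l)) atTop (𝓝 0) :=
    Real.tendsto_exp_atBot.comp h0
  have h2 : Tendsto (fun x : ℝ => -(k * Real.exp (-x / l))) atTop (𝓝 0) := by
    have := (h1.const_mul k).neg
    simpa using this
  have h3 : Tendsto (fun x : ℝ => Real.exp (-(k * Real.exp (-x / l)))) atTop (𝓝 1) := by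
    have := (Real.continuous_exp.tendsto 0).comp h2
    simpa [Function.comp_def] using this
  have h4 := h3.const_mul (1 / k)
  rw [mul_one] at h4
  exact h4

lemma tendsto_gumbelAuxCdf_atBot (l k : ℝ) (hl : 0 < l) (hk : 0 < k) :
    Tendsto (gumbelAuxCdf l k) atBot (𝓝 0) := by
  have h0 : Tendsto (fun x : ℝ => -x / l) atBot atTop := by
    apply Tendsto.atTop_div_const hl
    exact tendsto_neg_atTop_iff.mpr tendsto_id
  have h1 : Tendsto (fun x : ℝ => Real.exp (-x / l)) atBot atTop :=
    Real.tendsto_exp_atTop.comp h0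
  have h2 : Tendsto (fun x : ℝ => -(k * Real.exp (-x / l))) atBot atBot := by
    have := (h1.const_mul_atTop hk)
    exact tendsto_neg_atBot_iff.mpr this
  have h3 : Tendsto (fun x : ℝ => Real.exp (-(k * Real.exp (-x / l)))) atBot (𝓝 0) :=
    Real.tendsto_exp_atBot.comp h2
  have h4 := h3.const_mul (1 / k)
  rw [mul_zero] at h4
  exact h4

lemma integrable_gumbelAuxPdf (l k : ℝ) (hl : 0 < l) (hk : 0 < k) :
    Integrable (gumbelAuxPdf l k) := by
  have hIoi : IntegrableOn (gumbelAuxPdf l k) (Ioi 0) :=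
    integrableOn_Ioi_deriv_of_nonneg'
      (fun x _ => hasDerivAt_gumbelAuxCdf l k hl hk x)
      (fun x _ => gumbelAuxPdf_nonneg l k x hl)
      (tendsto_gumbelAuxCdf_atTop l k hl hk)
  have hderiv' : ∀ x ∈ Ici (0 : ℝ), HasDerivAt (fun y => -(gumbelAuxCdf l k (-y)))
      (gumbelAuxPdf l k (-x)) x := by
    intro x _
    have := ((hasDerivAt_gumbelAuxCdf l k hl hk (-x)).comp x (hasDerivAt_neg x)).neg
    exact this.congr_deriv (by ring)
  have htt : Tendsto (fun y => -(gumbelAuxCdf l k (-y))) atTop (𝓝 0) := by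
    have := ((tendsto_gumbelAuxCdf_atBot l k hl hk).comp tendsto_neg_atTop_atBot).neg
    simpa using this
  have hIoi' : IntegrableOn (fun x => gumbelAuxPdf l k (-x)) (Ioi 0) :=
    integrableOn_Ioi_deriv_of_nonneg' hderiv'
      (fun x _ => gumbelAuxPdf_nonneg l k (-x) hl) htt
  have hIio : IntegrableOn (gumbelAuxPdf l k) (Iio 0) := by
    have := ((Measure.measurePreserving_neg (volume : Measure ℝ)).integrableOn_comp_preimage
      (Homeomorph.neg ℝ).measurableEmbedding (f := gumbelAuxPdf l k) (s := Iio 0)).1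
    apply this
    have hpre : (Neg.neg : ℝ → ℝ) ⁻¹' (Iio 0) = Ioi 0 := by
      ext x; simp
    rw [hpre]
    exact hIoi'
  rw [← integrableOn_univ, ← Set.Iio_union_Ici (a := (0:ℝ))]
  apply IntegrableOn.union hIio
  rwa [integrableOn_Ici_iff_integrableOn_Ioi]

lemma integral_gumbelAuxPdf (l k : ℝ) (hl : 0 < l) (hk : 0 < k) :
    ∫ x, gumbelAuxPdf l k x = 1 / k := by
  have := integral_of_hasDerivAt_of_tendsto
    (fun x => hasDerivAt_gumbelAuxCdf l k hl hk x)
    (integrable_gumbelAuxPdf l k hl hk)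
    (tendsto_gumbelAuxCdf_atBot l k hl hk)
    (tendsto_gumbelAuxCdf_atTop l k hl hk)
  simpa using this

lemma lintegral_gumbelAuxPdf (l k : ℝ) (hl : 0 < l) (hk : 0 < k) :
    ∫⁻ x, ENNReal.ofReal (gumbelAuxPdf l k x) = ENNReal.ofReal (1 / k) := by
  rw [← ofReal_integral_eq_lintegral_ofReal (integrable_gumbelAuxPdf l k hl hk)
    (Filter.Eventually.of_forall fun x => gumbelAuxPdf_nonneg l k x hl),
    integral_gumbelAuxPdf l k hl hk]

lemma gumbel_density_eq (l : ℝ) (x : ℝ) :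
    (1 / l) * Real.exp (-x / l - Real.exp (-x / l)) = gumbelAuxPdf l 1 x := by
  unfold gumbelAuxPdf
  have h : -x / l - Real.exp (-x / l) = (-x / l) + (-(1 * Real.exp (-x / l))) := by ring
  rw [h, Real.exp_add]
  ring

lemma isProbabilityMeasure_gumbel (l : ℝ) (hl : 0 < l) :
    IsProbabilityMeasure (gumbel l) := by
  constructor
  rw [gumbel, withDensity_apply _ MeasurableSet.univ, Measure.restrict_univ]
  have : (fun x => ENNReal.ofReal ((1 / l) * Real.exp (-x / l - Real.exp (-x / l))))
      = fun x => ENNReal.ofReal (gumbelAuxPdf l 1 x) := by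
    funext x; rw [gumbel_density_eq l x]
  rw [this, lintegral_gumbelAuxPdf l 1 hl one_pos]
  norm_num

lemma gumbel_Iio (l : ℝ) (hl : 0 < l) (t : ℝ) :
    gumbel l (Iio t) = ENNReal.ofReal (Real.exp (-Real.exp (-t / l))) := by
  rw [gumbel, withDensity_apply _ measurableSet_Iio]
  have hfun : (fun x => ENNReal.ofReal ((1 / l) * Real.exp (-x / l - Real.exp (-x / l))))
      = fun x => ENNReal.ofReal (gumbelAuxPdf l 1 x) := by
    funext x; rw [gumbel_density_eq l x]
  rw [hfun]
  rw [← ofReal_integral_eq_lintegral_ofReal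
    ((integrable_gumbelAuxPdf l 1 hl one_pos).integrableOn)
    (Filter.Eventually.of_forall fun x => gumbelAuxPdf_nonneg l 1 x hl)]
  congr 1
  rw [← integral_Iic_eq_integral_Iio]
  have h := integral_Iic_of_hasDerivAt_of_tendsto' (a := t)
    (fun x _ => hasDerivAt_gumbelAuxCdf l 1 hl one_pos x)
    ((integrable_gumbelAuxPdf l 1 hl one_pos).integrableOn)
    (tendsto_gumbelAuxCdf_atBot l 1 hl one_pos)
  rw [h]
  simp [gumbelAuxCdf]

theorem gumbel_pairwise_comparison_logistic
    {Ω : Type*} [MeasurableSpace Ω] (P : Measure Ω) [IsProbabilityMeasure P]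
    (l : ℝ) (hl : 0 < l) (a b : ℝ)
    (ε₁ ε₂ : Ω → ℝ) (hmeas₁ : Measurable ε₁) (hmeas₂ : Measurable ε₂)
    (hindep : IndepFun ε₁ ε₂ P)
    (hdist₁ : Measure.map ε₁ P = gumbel l) (hdist₂ : Measure.map ε₂ P = gumbel l) :
    P {ω | b + ε₂ ω < a + ε₁ ω}
        = ENNReal.ofReal (Real.exp (a / l) / (Real.exp (a / l) + Real.exp (b / l))) ∧
      P {ω | b + ε₂ ω < a + ε₁ ω}
        = ENNReal.ofReal (1 / (1 + Real.exp ((b - a) / l))) := by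
  haveI : IsProbabilityMeasure (gumbel l) := isProbabilityMeasure_gumbel l hl
  set k : ℝ := Real.exp ((b - a) / l) with hk_def
  have hk : 0 < k := Real.exp_pos _
  have h1k : 0 < 1 + k := by linarith
  -- main computation
  have hS : MeasurableSet {p : ℝ × ℝ | b + p.2 < a + p.1} := by
    apply measurableSet_lt <;> fun_prop
  have hmap : Measure.map (fun ω => (ε₁ ω, ε₂ ω)) P = (gumbel l).prod (gumbel l) := by
    have h := (indepFun_iff_map_prod_eq_prod_map_map hmeas₁.aemeasurable
      hmeas₂.aemeasurable).1 hindep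
    rwa [hdist₁, hdist₂] at h
  have hset : {ω | b + ε₂ ω < a + ε₁ ω}
      = (fun ω => (ε₁ ω, ε₂ ω)) ⁻¹' {p : ℝ × ℝ | b + p.2 < a + p.1} := rfl
  have key : P {ω | b + ε₂ ω < a + ε₁ ω} = ENNReal.ofReal (1 / (1 + k)) := by
    rw [hset, ← Measure.map_apply (hmeas₁.prodMk hmeas₂) hS, hmap,
      Measure.prod_apply hS]
    have hslice : ∀ x : ℝ, (Prod.mk x ⁻¹' {p : ℝ × ℝ | b + p.2 < a + p.1}) = Iio (a + x - b) := by
      intro x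
      ext y
      simp only [mem_preimage, mem_setOf_eq, mem_Iio]
      constructor <;> intro h <;> linarith
    have hinner : ∀ x : ℝ, gumbel l (Prod.mk x ⁻¹' {p : ℝ × ℝ | b + p.2 < a + p.1})
        = ENNReal.ofReal (Real.exp (-(k * Real.exp (-x / l)))) := by
      intro x
      rw [hslice x, gumbel_Iio l hl]
      congr 2
      rw [hk_def, ← Real.exp_add]
      congr 1
      field_simp
      ring
    simp_rw [hinner]
    rw [gumbel, lintegral_withDensity_eq_lintegral_mul]
    · have heq : ∀ x : ℝ, ENNReal.ofReal ((1 / l) * Real.exp (-x / l - Real.exp (-x / l)))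
          * ENNReal.ofReal (Real.exp (-(k * Real.exp (-x / l))))
          = ENNReal.ofReal (gumbelAuxPdf l (1 + k) x) := by
        intro x
        rw [gumbel_density_eq l x, ← ENNReal.ofReal_mul (gumbelAuxPdf_nonneg l 1 x hl)]
        congr 1
        unfold gumbelAuxPdf
        have hexp : Real.exp (-(1 * Real.exp (-x / l))) * Real.exp (-(k * Real.exp (-x / l)))
            = Real.exp (-((1 + k) * Real.exp (-x / l))) := by
          rw [← Real.exp_add]
          congr 1
          ring
        rw [mul_assoc, hexp]
      simp only [Pi.mul_apply]
      rw [lintegral_congr heq, lintegral_gumbelAuxPdf l (1 + k) hl h1k]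
    · apply Measurable.ennreal_ofReal
      fun_prop
    · apply Measurable.ennreal_ofReal
      fun_prop
  have halg : Real.exp (a / l) / (Real.exp (a / l) + Real.exp (b / l)) = 1 / (1 + k) := by
    rw [hk_def]
    have hba : Real.exp ((b - a) / l) = Real.exp (b / l) / Real.exp (a / l) := by
      rw [← Real.exp_sub]
      congr 1
      field_simp
    rw [hba]
    have ha := Real.exp_pos (a / l)
    have hb := Real.exp_pos (b / l)
    field_simp
  exact ⟨by rw [key, halg], key⟩
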